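/- arXiv:1612.01168 — 5 statements merged into one kernel-verified Lean document; each statement's English description precedes it below -/
import Mathlib

section
/- Let G be a solvable group and let ρ : G → PSL₂(ℂ) be a group homomorphism whose image is an irreducible and infinite subgroup of PSL₂(ℂ). Then the image of ρ is dihedral. -/
/-- `SL₂(ℂ)`: the group of 2×2 complex matrices of determinant 1. -/
abbrev SL2 : Type := Matrix.SpecialLinearGroup (Fin 2) ℂ

/-- `PSL₂(ℂ)`: the quotient of `SL₂(ℂ)` by its center `{±I}`. -/
abbrev PSL2 : Type := SL2 ⧸ Subgroup.center SL2

/-- A subgroup `H` of `PSL₂(ℂ)` is irreducible if no one-dimensional subspace of `ℂ²`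
(i.e. the span of a nonzero vector) is invariant under all lifts to `SL₂(ℂ)` of all
elements of `H`. -/
def IsIrreducibleSubgroup (H : Subgroup PSL2) : Prop :=
  ¬ ∃ v : Fin 2 → ℂ, v ≠ 0 ∧ ∀ M : SL2, (QuotientGroup.mk M : PSL2) ∈ H →
      ∃ c : ℂ, (M : Matrix (Fin 2) (Fin 2) ℂ).mulVec v = c • v

/-- A matrix in `SL₂(ℂ)` is diagonal of the form `[[λ,0],[0,λ⁻¹]]` or
anti-diagonal of the form `[[0,μ],[-μ⁻¹,0]]`. -/
def IsDiagOrAnti (M : SL2) : Prop :=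
  (∃ l : ℂ, l ≠ 0 ∧ (M : Matrix (Fin 2) (Fin 2) ℂ) = !![l, 0; 0, l⁻¹]) ∨
  (∃ m : ℂ, m ≠ 0 ∧ (M : Matrix (Fin 2) (Fin 2) ℂ) = !![0, m; -m⁻¹, 0])

/-- A subgroup `H` of `PSL₂(ℂ)` is dihedral if some conjugate of `H` is contained in the
image in `PSL₂(ℂ)` of the set of diagonal and anti-diagonal matrices in `SL₂(ℂ)`. -/
def IsDihedral (H : Subgroup PSL2) : Prop :=
  ∃ g : PSL2, ∀ h ∈ H, ∃ M : SL2, IsDiagOrAnti M ∧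
    g * h * g⁻¹ = (QuotientGroup.mk M : PSL2)

open Matrix
noncomputable section

namespace SolvDih

local notation "↟" M:max => ((M : SL2) : Matrix (Fin 2) (Fin 2) ℂ)
local notation "mk'" M:max => (QuotientGroup.mk (M : SL2) : PSL2)

lemma neg_one_diag : (Matrix.diagonal (fun _ : Fin 2 => (-1:ℂ))) = -1 := by
  simp [← Matrix.diagonal_one, ← Matrix.diagonal_neg]

lemma mem_center_iff' (M : SL2) : M ∈ Subgroup.center SL2 ↔ (↟M) = 1 ∨ (↟M) = -1 := by
  rw [Matrix.SpecialLinearGroup.mem_center_iff]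
  constructor
  · rintro ⟨r, hr, hM⟩
    have hr2 : (r : ℂ) ^ 2 = 1 := by simpa using hr
    rcases sq_eq_one_iff.mp hr2 with h | h <;> [left; right] <;>
      rw [← hM, h, Matrix.scalar_apply]
    · simp
    · exact neg_one_diag
  · rintro (h | h)
    · exact ⟨1, by simp, by rw [Matrix.scalar_apply]; simp [h]⟩
    · exact ⟨-1, by simp, by rw [Matrix.scalar_apply, neg_one_diag, h]⟩

lemma mk_eq_mk {M N : SL2} : (mk' M) = (mk' N) ↔ (↟N) = (↟M) ∨ (↟N) = -((↟M)) := by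
  rw [QuotientGroup.eq, mem_center_iff']
  have key : (↟M) * (↟(M⁻¹ * N)) = (↟N) := by
    rw [← Matrix.SpecialLinearGroup.coe_mul, ← mul_assoc, mul_inv_cancel, one_mul]
  constructor
  · rintro (h | h)
    · left; rw [← key]; rw [show (↟(M⁻¹*N)) = 1 from h, mul_one]
    · right; rw [← key]; rw [show (↟(M⁻¹*N)) = -1 from h, mul_neg, mul_one]
  · rintro (h | h)
    · left
      have : M⁻¹ * N = 1 := by rw [inv_mul_eq_one]; exact (Subtype.ext h).symm
      rw [this]; simp
    · right
      show (↟(M⁻¹ * N)) = -1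
      rw [Matrix.SpecialLinearGroup.coe_mul]
      rw [show (↟N) = -((↟M)) from h, Matrix.mul_neg,
        ← Matrix.SpecialLinearGroup.coe_mul, inv_mul_cancel]
      simp

lemma mk_eq_one {M : SL2} : (mk' M) = 1 ↔ (↟M) = 1 ∨ (↟M) = -1 := by
  have : (1 : PSL2) = (mk'(1 : SL2)) := rfl
  rw [this, mk_eq_mk]
  simp [eq_comm, neg_eq_iff_eq_neg]

lemma mat2_eq_iff {a b c d e f g h : ℂ} :
    !![a,b;c,d] = !![e,f;g,h] ↔ a = e ∧ b = f ∧ c = g ∧ d = h := by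
  constructor
  · intro H
    exact ⟨by simpa using congrFun (congrFun H 0) 0,
           by simpa using congrFun (congrFun H 0) 1,
           by simpa using congrFun (congrFun H 1) 0,
           by simpa using congrFun (congrFun H 1) 1⟩
  · rintro ⟨rfl, rfl, rfl, rfl⟩; rfl

lemma exists_entries (M : SL2) : ∃ a b c d : ℂ,
    (↟M) = !![a,b;c,d] ∧ a*d - b*c = 1 := by
  refine ⟨M 0 0, M 0 1, M 1 0, M 1 1, Matrix.eta_fin_two _, ?_⟩
  have := M.property
  rwa [Matrix.det_fin_two] at this

lemma mulVec2 (a b c d x y : ℂ) :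
    (!![a,b;c,d]).mulVec ![x,y] = ![a*x+b*y, c*x+d*y] := by
  funext i
  fin_cases i <;> simp [Matrix.mulVec, dotProduct, Fin.sum_univ_two]

/-- commuting with diag(l,k), lk=1, l²≠1 forces diagonal -/
lemma comm_diag_plus {l k p q r s : ℂ} (hk : l * k = 1) (hl1 : l^2 ≠ 1)
    (hdet : p*s - q*r = 1)
    (hcomm : !![p,q;r,s] * !![l,0;0,k] = !![l,0;0,k] * !![p,q;r,s]) :
    q = 0 ∧ r = 0 ∧ p ≠ 0 ∧ s = p⁻¹ := by
  rw [Matrix.mul_fin_two, Matrix.mul_fin_two, mat2_eq_iff] at hcomm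
  obtain ⟨h1, h2, h3, h4⟩ := hcomm
  have hl1' : l^2 - 1 ≠ 0 := sub_ne_zero.mpr hl1
  have hq : q = 0 := by
    have : q * (l^2 - 1) = 0 := by linear_combination q*hk - l*h2
    exact (mul_eq_zero.mp this).resolve_right hl1'
  have hr : r = 0 := by
    have : r * (l^2 - 1) = 0 := by linear_combination l*h3 + r*hk
    exact (mul_eq_zero.mp this).resolve_right hl1'
  have hp : p ≠ 0 := by
    intro h; rw [h, hq] at hdet; simp at hdet
  refine ⟨hq, hr, hp, ?_⟩
  rw [hq, hr] at hdet
  field_simp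
  linear_combination hdet

/-- intertwining diag(l,k) to diag(k,l), lk=1, l²≠1 forces antidiagonal -/
lemma comm_diag_swap {l k p q r s : ℂ} (hk : l * k = 1) (hl1 : l^2 ≠ 1)
    (hdet : p*s - q*r = 1)
    (hcomm : !![p,q;r,s] * !![l,0;0,k] = !![k,0;0,l] * !![p,q;r,s]) :
    p = 0 ∧ s = 0 ∧ q ≠ 0 ∧ r = -q⁻¹ := by
  rw [Matrix.mul_fin_two, Matrix.mul_fin_two, mat2_eq_iff] at hcomm
  obtain ⟨h1, h2, h3, h4⟩ := hcomm
  have hl1' : l^2 - 1 ≠ 0 := sub_ne_zero.mpr hl1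
  have hp : p = 0 := by
    have : p * (l^2 - 1) = 0 := by linear_combination l*h1 + p*hk
    exact (mul_eq_zero.mp this).resolve_right hl1'
  have hs : s = 0 := by
    have : s * (l^2 - 1) = 0 := by linear_combination s*hk - l*h4
    exact (mul_eq_zero.mp this).resolve_right hl1'
  have hq : q ≠ 0 := by
    intro h; rw [h, hp] at hdet; simp at hdet
  refine ⟨hp, hs, hq, ?_⟩
  rw [hp, hs] at hdet
  field_simp
  linear_combination -hdet

/-- anticommuting with diag(l,k), lk=1, l²≠-1 is impossible for det-1 -/
lemma comm_diag_neg {l k p q r s : ℂ} (hk : l * k = 1) (hl1 : l^2 ≠ -1)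
    (hdet : p*s - q*r = 1)
    (hcomm : !![p,q;r,s] * !![l,0;0,k] = -(!![l,0;0,k] * !![p,q;r,s])) :
    False := by
  rw [Matrix.mul_fin_two, Matrix.mul_fin_two] at hcomm
  rw [show -(!![l*p+0*r, l*q+0*s; 0*p+k*r, 0*q+k*s]) = !![-(l*p+0*r), -(l*q+0*s); -(0*p+k*r), -(0*q+k*s)] by
    ext i j; fin_cases i <;> fin_cases j <;> simp] at hcomm
  rw [mat2_eq_iff] at hcomm
  obtain ⟨h1, h2, h3, h4⟩ := hcomm
  have hl0 : l ≠ 0 := by rintro rfl; simp at hk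
  have hl1' : l^2 + 1 ≠ 0 := by intro h; exact hl1 (by linear_combination h)
  have hp : p = 0 := by
    have : p * (2*l) = 0 := by linear_combination h1
    rcases mul_eq_zero.mp this with h | h
    · exact h
    · exact absurd h (by simpa using hl0)
  have hs : s = 0 := by
    have : s * (2*k) = 0 := by linear_combination h4
    have hk0 : k ≠ 0 := by rintro rfl; simp at hk
    rcases mul_eq_zero.mp this with h | h
    · exact h
    · exact absurd h (by simpa using hk0)
  have hq : q = 0 := by
    have : q * (l^2 + 1) = 0 := by linear_combination l*h2 - q*hk
    exact (mul_eq_zero.mp this).resolve_right hl1'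
  rw [hp, hs, hq] at hdet
  simp at hdet

lemma eigvec2 {a b c d l : ℂ} (h : (a - l)*(d - l) - b*c = 0) :
    ∃ v0 v1 : ℂ, ¬(v0 = 0 ∧ v1 = 0) ∧ a*v0+b*v1 = l*v0 ∧ c*v0+d*v1 = l*v1 := by
  by_cases hb : b ≠ 0
  · exact ⟨b, l - a, fun h' => hb h'.1, by ring, by linear_combination -h⟩
  push_neg at hb
  by_cases hc : c ≠ 0
  · exact ⟨l - d, c, fun h' => hc h'.2, by linear_combination -h, by ring⟩
  push_neg at hc
  rcases mul_eq_zero.mp (show (a-l)*(d-l) = 0 by linear_combination h + c*hb) with h' | h'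
  · have ha : a = l := by linear_combination h'
    exact ⟨1, 0, fun h' => one_ne_zero h'.1, by rw [ha, hb]; ring, by rw [hc]; ring⟩
  · have hd : d = l := by linear_combination h'
    exact ⟨0, 1, fun h' => one_ne_zero h'.2, by rw [hb]; ring, by rw [hd]; ring⟩

lemma indep {a b c d l k v0 v1 w0 w1 : ℂ} (hlk : l ≠ k)
    (hv : ¬(v0=0∧v1=0)) (hw : ¬(w0=0∧w1=0))
    (ev1 : a*v0+b*v1 = l*v0) (ev2 : c*v0+d*v1 = l*v1)
    (ew1 : a*w0+b*w1 = k*w0) (ew2 : c*w0+d*w1 = k*w1) :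
    v0*w1 - w0*v1 ≠ 0 := by
  intro hδ
  have hlk' : l - k ≠ 0 := sub_ne_zero.mpr hlk
  rcases not_and_or.mp hv with h0 | h1
  · have hw0 : w0 * v0 * (l - k) = 0 := by linear_combination v0*ew1 - w0*ev1 - b*hδ
    have hw0' : w0 = 0 := by
      rcases mul_eq_zero.mp hw0 with h | h
      · rcases mul_eq_zero.mp h with h | h
        · exact h
        · exact absurd h h0
      · exact absurd h hlk'
    have hw1 : w1 ≠ 0 := fun h => hw ⟨hw0', h⟩
    rw [hw0'] at hδ
    rcases mul_eq_zero.mp (by linear_combination hδ : v0 * w1 = 0) with h | h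
    · exact h0 h
    · exact hw1 h
  · have hw1 : w1 * v1 * (l - k) = 0 := by linear_combination v1*ew2 - w1*ev2 + c*hδ
    have hw1' : w1 = 0 := by
      rcases mul_eq_zero.mp hw1 with h | h
      · rcases mul_eq_zero.mp h with h | h
        · exact h
        · exact absurd h h1
      · exact absurd h hlk'
    have hw0 : w0 ≠ 0 := fun h => hw ⟨h, hw1'⟩
    rw [hw1'] at hδ
    rcases mul_eq_zero.mp (by linear_combination -hδ : w0 * v1 = 0) with h | h
    · exact hw0 h
    · exact h1 h

lemma diagonalize (M : SL2) (l : ℂ) (hl0 : l ≠ 0) (hl1 : l^2 ≠ 1)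
    (ht : Matrix.trace ((↟M)) = l + l⁻¹) :
    ∃ P : SL2, (↟(P * M * P⁻¹)) = !![l, 0; 0, l⁻¹] := by
  obtain ⟨a, b, c, d, hM, hdet⟩ := exists_entries M
  have hk : l * l⁻¹ = 1 := mul_inv_cancel₀ hl0
  have htr : a + d = l + l⁻¹ := by
    rw [hM, Matrix.trace_fin_two] at ht
    simpa using ht
  have hlk : l ≠ l⁻¹ := by
    intro h; apply hl1; rw [sq]; nth_rewrite 2 [h]; exact hk
  obtain ⟨v0, v1, hv, ev1, ev2⟩ :=
    eigvec2 (show (a-l)*(d-l)-b*c = 0 by linear_combination hdet - l*htr - hk)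
  obtain ⟨w0, w1, hw, ew1, ew2⟩ :=
    eigvec2 (show (a-l⁻¹)*(d-l⁻¹)-b*c = 0 by linear_combination hdet - l⁻¹*htr - hk)
  have hδ : v0*w1 - w0*v1 ≠ 0 := indep hlk hv hw ev1 ev2 ew1 ew2
  have hδ' : (v0*w1 - w0*v1)⁻¹ * (v0*w1 - w0*v1) = 1 := inv_mul_cancel₀ hδ
  set e := (v0*w1 - w0*v1)⁻¹ with he
  have hQdet : (!![e*v0, w0; e*v1, w1]).det = 1 := by
    rw [Matrix.det_fin_two_of]
    linear_combination hδ'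
  let Q : SL2 := ⟨!![e*v0, w0; e*v1, w1], hQdet⟩
  have hQcoe : (↟Q) = !![e*v0, w0; e*v1, w1] := rfl
  have key : (↟M) * (↟Q) = (↟Q) * !![l,0;0,l⁻¹] := by
    rw [hQcoe, hM, Matrix.mul_fin_two, Matrix.mul_fin_two, mat2_eq_iff]
    exact ⟨by linear_combination e*ev1, by linear_combination ew1,
           by linear_combination e*ev2, by linear_combination ew2⟩
  refine ⟨Q⁻¹, ?_⟩
  have h1 : (↟Q⁻¹) * (↟Q) = 1 := by
    rw [← Matrix.SpecialLinearGroup.coe_mul, inv_mul_cancel]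
    rfl
  calc (↟(Q⁻¹ * M * (Q⁻¹)⁻¹))
      = (↟Q⁻¹) * ((↟M) * (↟Q)) := by
        rw [inv_inv, Matrix.SpecialLinearGroup.coe_mul, Matrix.SpecialLinearGroup.coe_mul,
          Matrix.mul_assoc]
    _ = ((↟Q⁻¹) * (↟Q)) * !![l,0;0,l⁻¹] := by
        rw [key, Matrix.mul_assoc]
    _ = !![l,0;0,l⁻¹] := by rw [h1, Matrix.one_mul]

lemma trace_conj (N M : SL2) : Matrix.trace (↟(N * M * N⁻¹)) = Matrix.trace (↟M) := by
  rw [show ((N * M * N⁻¹ : SL2) : Matrix (Fin 2) (Fin 2) ℂ) = ((N*M : SL2) : Matrix (Fin 2) (Fin 2) ℂ) * (↟N⁻¹) from rfl]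
  rw [Matrix.trace_mul_comm]
  rw [show (↟N⁻¹) * ((N*M : SL2) : Matrix (Fin 2) (Fin 2) ℂ) = (↟(N⁻¹ * (N * M))) from rfl]
  rw [← mul_assoc, inv_mul_cancel, one_mul]

/-- commuting in PSL2 means commuting up to sign in SL2 -/
lemma comm_lift {A B : SL2} (h : (mk' A) * (mk' B) = (mk' B) * (mk' A)) :
    (↟A) * (↟B) = (↟B) * (↟A) ∨ (↟A) * (↟B) = -((↟B) * (↟A)) := by
  have h' : (mk'(A*B)) = (mk'(B*A)) := h
  rcases mk_eq_mk.mp h' with h'' | h''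
  · left; exact h''.symm
  · right
    rw [show (↟(B*A)) = (↟B)*(↟A) from rfl, show (↟(A*B)) = (↟A)*(↟B) from rfl] at h''
    rw [h'', neg_neg]

/-- Main lemma, generic diagonalizable case: if N·D·N⁻¹ commutes in PSL2 with D,
D = diag(l, l⁻¹), l² ≠ ±1, then N is diagonal or antidiagonal. -/
lemma main_generic (l : ℂ) (hl0 : l ≠ 0) (hl1 : l^2 ≠ 1) (hlm1 : l^2 ≠ -1)
    (D N : SL2) (hD : (↟D) = !![l,0;0,l⁻¹])
    (hcomm : (mk'(N*D*N⁻¹)) * (mk' D) = (mk' D) * (mk'(N*D*N⁻¹))) :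
    IsDiagOrAnti N := by
  have hk : l * l⁻¹ = 1 := mul_inv_cancel₀ hl0
  set B := N*D*N⁻¹ with hBdef
  obtain ⟨p, q, r, s, hB, hdetB⟩ := exists_entries B
  rcases comm_lift hcomm with h | h
  swap
  · -- anticommuting: impossible
    exfalso
    have h2 : !![p,q;r,s] * !![l,0;0,l⁻¹] = -(!![l,0;0,l⁻¹] * !![p,q;r,s]) := by
      rw [← hB, ← hD]; exact h
    exact comm_diag_neg hk hlm1 hdetB h2
  · -- B commutes with D hence diagonal
    obtain ⟨hq, hr, hp, hs⟩ := comm_diag_plus hk hl1 hdetB (by rw [← hB, ← hD]; exact h)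
    rw [hq, hr, hs] at hB
    -- trace of B equals trace of D
    have htr : p + p⁻¹ = l + l⁻¹ := by
      have := trace_conj N D
      rw [hB, hD, Matrix.trace_fin_two_of, Matrix.trace_fin_two_of] at this
      exact this
    have hcase : p = l ∨ p = l⁻¹ := by
      have hfact : (p - l) * (p - l⁻¹) = 0 := by
        have hp' : p * p⁻¹ = 1 := mul_inv_cancel₀ hp
        linear_combination p*htr + hk - hp'
      rcases mul_eq_zero.mp hfact with h' | h'
      · left; linear_combination h'
      · right; linear_combination h'
    -- N D = B N
    have hND : (↟N) * (↟D) = (↟B) * (↟N) := by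
      have : (B * N : SL2) = N * D := by rw [hBdef]; group
      calc (↟N) * (↟D) = (↟(N*D)) := rfl
        _ = (↟(B*N)) := by rw [this]
        _ = (↟B) * (↟N) := rfl
    obtain ⟨n1, n2, n3, n4, hN, hdetN⟩ := exists_entries N
    rcases hcase with h' | h'
    · -- B = D, N commutes with D: diagonal
      left
      have hBD : (↟B) = !![l,0;0,l⁻¹] := by rw [hB, h']
      have h2 : !![n1,n2;n3,n4] * !![l,0;0,l⁻¹] = !![l,0;0,l⁻¹] * !![n1,n2;n3,n4] :=
        calc !![n1,n2;n3,n4] * !![l,0;0,l⁻¹] = (↟N) * (↟D) := by rw [hN, hD]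
          _ = (↟B) * (↟N) := hND
          _ = !![l,0;0,l⁻¹] * !![n1,n2;n3,n4] := by rw [hBD, hN]
      obtain ⟨e1, e2, e3, e4⟩ := comm_diag_plus hk hl1 hdetN h2
      exact ⟨n1, e3, by rw [hN, e1, e2, e4]⟩
    · -- B = diag(l⁻¹, l): N antidiagonal
      right
      have hBD : (↟B) = !![l⁻¹,0;0,l] := by rw [hB, h', inv_inv]
      have h2 : !![n1,n2;n3,n4] * !![l,0;0,l⁻¹] = !![l⁻¹,0;0,l] * !![n1,n2;n3,n4] :=
        calc !![n1,n2;n3,n4] * !![l,0;0,l⁻¹] = (↟N) * (↟D) := by rw [hN, hD]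
          _ = (↟B) * (↟N) := hND
          _ = !![l⁻¹,0;0,l] * !![n1,n2;n3,n4] := by rw [hBD, hN]
      obtain ⟨e1, e2, e3, e4⟩ := comm_diag_swap hk hl1 hdetN h2
      exact ⟨n2, e3, by rw [hN, e1, e2, e4]⟩

/-- Main lemma for the order-two case: commuting with mk of J = diag(i,-i) in PSL2
forces diagonal or antidiagonal. -/
lemma main_J (D N : SL2) (hD : (↟D) = !![Complex.I, 0; 0, -Complex.I])
    (hcomm : (mk' N) * (mk' D) = (mk' D) * (mk' N)) :
    IsDiagOrAnti N := by
  have hD' : (↟D) = !![Complex.I, 0; 0, Complex.I⁻¹] := by rw [hD, Complex.inv_I]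
  have hk : Complex.I * Complex.I⁻¹ = 1 := mul_inv_cancel₀ Complex.I_ne_zero
  have hl1 : Complex.I^2 ≠ 1 := by rw [Complex.I_sq]; intro h; norm_num at h
  obtain ⟨n1, n2, n3, n4, hN, hdetN⟩ := exists_entries N
  rcases comm_lift hcomm with h | h
  · left
    have h2 : !![n1,n2;n3,n4] * !![Complex.I,0;0,Complex.I⁻¹] = !![Complex.I,0;0,Complex.I⁻¹] * !![n1,n2;n3,n4] := by
      rw [← hN, ← hD']; exact h
    obtain ⟨e1, e2, e3, e4⟩ := comm_diag_plus hk hl1 hdetN h2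
    exact ⟨n1, e3, by rw [hN, e1, e2, e4]⟩
  · right
    have h2 : !![n1,n2;n3,n4] * !![Complex.I,0;0,Complex.I⁻¹] = !![Complex.I⁻¹,0;0,Complex.I] * !![n1,n2;n3,n4] :=
      calc !![n1,n2;n3,n4] * !![Complex.I,0;0,Complex.I⁻¹] = (↟N) * (↟D) := by rw [hN, hD']
        _ = -((↟D)) * (↟N) := by rw [h, Matrix.neg_mul]
        _ = !![Complex.I⁻¹,0;0,Complex.I] * !![n1,n2;n3,n4] := by
            rw [hD, hN]
            congr 1
            ext i j
            fin_cases i <;> fin_cases j <;> simp [Complex.inv_I]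
    obtain ⟨e1, e2, e3, e4⟩ := comm_diag_swap hk hl1 hdetN h2
    exact ⟨n2, e3, by rw [hN, e1, e2, e4]⟩

lemma prop_row {al be v0 v1 w0 w1 : ℂ} (hrow : ¬(al = 0 ∧ be = 0))
    (hv : al*v0 + be*v1 = 0) (hw : al*w0 + be*w1 = 0) : v0*w1 - w0*v1 = 0 := by
  rcases not_and_or.mp hrow with h | h
  · have : al * (v0*w1 - w0*v1) = 0 := by linear_combination w1*hv - v1*hw
    exact (mul_eq_zero.mp this).resolve_left h
  · have : be * (v0*w1 - w0*v1) = 0 := by linear_combination -w0*hv + v0*hw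
    exact (mul_eq_zero.mp this).resolve_left h

lemma proportional {v0 v1 w0 w1 : ℂ} (hv : ¬(v0 = 0 ∧ v1 = 0))
    (hd : v0*w1 - w0*v1 = 0) : ∃ e : ℂ, w0 = e*v0 ∧ w1 = e*v1 := by
  rcases not_and_or.mp hv with h | h
  · have hv0 : v0 * v0⁻¹ = 1 := mul_inv_cancel₀ h
    exact ⟨w0 * v0⁻¹, by linear_combination -w0*hv0, by linear_combination v0⁻¹*hd - w1*hv0⟩
  · have hv1 : v1 * v1⁻¹ = 1 := mul_inv_cancel₀ h
    exact ⟨w1 * v1⁻¹, by linear_combination -v1⁻¹*hd - w0*hv1, by linear_combination -w1*hv1⟩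

lemma parab_uniq {a b c d ep w0 w1 t : ℂ} (hdet : a*d - b*c = 1) (htr : a + d = 2*ep)
    (he2 : ep^2 = 1) (hw : ¬(w0 = 0 ∧ w1 = 0))
    (ew1 : a*w0+b*w1 = t*w0) (ew2 : c*w0+d*w1 = t*w1) :
    t = ep ∧ (a-ep)*w0 + b*w1 = 0 ∧ c*w0 + (d-ep)*w1 = 0 := by
  have h1 : ((a-t)*(d-t) - b*c) * w0 = 0 := by linear_combination (d-t)*ew1 - b*ew2
  have h2 : ((a-t)*(d-t) - b*c) * w1 = 0 := by linear_combination (a-t)*ew2 - c*ew1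
  have det0 : (a-t)*(d-t) - b*c = 0 := by
    rcases not_and_or.mp hw with h | h
    · exact (mul_eq_zero.mp h1).resolve_right h
    · exact (mul_eq_zero.mp h2).resolve_right h
  have hsq : (t - ep)^2 = 0 := by linear_combination det0 - hdet + t*htr + he2
  have ht : t = ep := by
    have := sq_eq_zero_iff.mp hsq
    linear_combination this
  subst ht
  exact ⟨rfl, by linear_combination ew1, by linear_combination ew2⟩

lemma vec2_ne_zero {v0 v1 : ℂ} (hv : ¬(v0 = 0 ∧ v1 = 0)) : (![v0,v1] : Fin 2 → ℂ) ≠ 0 := by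
  intro h
  exact hv ⟨by simpa using congrFun h 0, by simpa using congrFun h 1⟩

lemma smul_vec2 (c x y : ℂ) : c • (![x,y] : Fin 2 → ℂ) = ![c*x, c*y] := by
  funext i; fin_cases i <;> simp

/-- The parabolic case: an abelian subgroup A normalized by H containing a parabolic
element makes H reducible. -/
lemma parab_contra (H A : Subgroup PSL2)
    (hab : ∀ x ∈ A, ∀ y ∈ A, x*y = y*x)
    (hnorm : ∀ h ∈ H, ∀ x ∈ A, h * x * h⁻¹ ∈ A)
    (M : SL2) (hMA : (mk' M) ∈ A) (ep : ℂ) (he2 : ep^2 = 1)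
    (htr : Matrix.trace (↟M) = 2*ep)
    (hMne : (↟M) ≠ ep • (1 : Matrix (Fin 2) (Fin 2) ℂ)) :
    ∃ v : Fin 2 → ℂ, v ≠ 0 ∧ ∀ N : SL2, (mk' N) ∈ H →
      ∃ c : ℂ, (↟N).mulVec v = c • v := by
  obtain ⟨a, b, c, d, hM, hdet⟩ := exists_entries M
  have htr' : a + d = 2*ep := by
    rw [hM, Matrix.trace_fin_two_of] at htr; exact htr
  obtain ⟨v0, v1, hv, ev1, ev2⟩ :=
    eigvec2 (show (a-ep)*(d-ep)-b*c = 0 by linear_combination hdet - ep*htr' - he2)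
  have kv1 : (a-ep)*v0 + b*v1 = 0 := by linear_combination ev1
  have kv2 : c*v0 + (d-ep)*v1 = 0 := by linear_combination ev2
  -- some row of M - ep is nonzero
  have hrow : ¬((a-ep) = 0 ∧ b = 0) ∨ ¬(c = 0 ∧ (d-ep) = 0) := by
    by_contra hcon
    push_neg at hcon
    obtain ⟨⟨ha', hb'⟩, hc', hd'⟩ := hcon
    apply hMne
    have ha2 : a = ep := by linear_combination ha'
    have hd2 : d = ep := by linear_combination hd'
    rw [hM, ha2, hb', hc', hd2]
    ext i j
    fin_cases i <;> fin_cases j <;> simp [Matrix.one_apply]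
  -- common: two kernel vectors are proportional
  have kerprop : ∀ w0 w1 : ℂ, (a-ep)*w0 + b*w1 = 0 → c*w0 + (d-ep)*w1 = 0 →
      ∃ e : ℂ, w0 = e*v0 ∧ w1 = e*v1 := by
    intro w0 w1 kw1 kw2
    rcases hrow with h | h
    · exact proportional hv (prop_row h kv1 kw1)
    · exact proportional hv (prop_row h kv2 kw2)
  refine ⟨![v0,v1], vec2_ne_zero hv, ?_⟩
  intro N hN
  -- X = N⁻¹ M N lies in A and commutes with M up to sign
  set X : SL2 := N⁻¹ * M * N with hXdef
  have hXA : (mk' X) ∈ A := by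
    have h1 : (QuotientGroup.mk N : PSL2)⁻¹ ∈ H := inv_mem hN
    have := hnorm _ h1 _ hMA
    rwa [inv_inv, show (QuotientGroup.mk N : PSL2)⁻¹ * QuotientGroup.mk M * QuotientGroup.mk N
      = (mk' X) from rfl] at this
  have hcomm : (mk' X) * (mk' M) = (mk' M) * (mk' X) := hab _ hXA _ hMA
  obtain ⟨p, q, r, s, hX, hdX⟩ := exists_entries X
  obtain ⟨n1, n2, n3, n4, hN', hdN⟩ := exists_entries N
  -- N X = M N
  have hNX : (↟N) * (↟X) = (↟M) * (↟N) := by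
    have : (N * X : SL2) = M * N := by rw [hXdef]; group
    calc (↟N) * (↟X) = (↟(N*X)) := rfl
      _ = (↟(M*N)) := by rw [this]
      _ = (↟M) * (↟N) := rfl
  rw [hN', hX, hM, Matrix.mul_fin_two, Matrix.mul_fin_two, mat2_eq_iff] at hNX
  obtain ⟨E1, E2, E3, E4⟩ := hNX
  rcases comm_lift hcomm with hpm | hpm
  · -- X commutes with M
    have hpm' : (↟M) * (↟X) = (↟X) * (↟M) := hpm.symm
    rw [hX, hM, Matrix.mul_fin_two, Matrix.mul_fin_two, mat2_eq_iff] at hpm'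
    obtain ⟨G1, G2, G3, G4⟩ := hpm'
    -- w = X v is a nonzero eigenvector of M with eigenvalue ep
    have hwnz : ¬(p*v0+q*v1 = 0 ∧ r*v0+s*v1 = 0) := by
      rintro ⟨h1, h2⟩
      exact hv ⟨by linear_combination s*h1 - q*h2 - v0*hdX,
                by linear_combination p*h2 - r*h1 - v1*hdX⟩
    have cw1 : a*(p*v0+q*v1) + b*(r*v0+s*v1) = ep*(p*v0+q*v1) := by
      linear_combination v0*G1 + v1*G2 + p*ev1 + q*ev2
    have cw2 : c*(p*v0+q*v1) + d*(r*v0+s*v1) = ep*(r*v0+s*v1) := by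
      linear_combination v0*G3 + v1*G4 + r*ev1 + s*ev2
    obtain ⟨e, hw0, hw1⟩ := kerprop (p*v0+q*v1) (r*v0+s*v1) (by linear_combination cw1) (by linear_combination cw2)
    -- u = N v satisfies M u = e u
    have cu1 : a*(n1*v0+n2*v1) + b*(n3*v0+n4*v1) = e*(n1*v0+n2*v1) := by
      linear_combination -v0*E1 - v1*E2 + n1*hw0 + n2*hw1
    have cu2 : c*(n1*v0+n2*v1) + d*(n3*v0+n4*v1) = e*(n3*v0+n4*v1) := by
      linear_combination -v0*E3 - v1*E4 + n3*hw0 + n4*hw1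
    have hunz : ¬(n1*v0+n2*v1 = 0 ∧ n3*v0+n4*v1 = 0) := by
      rintro ⟨h1, h2⟩
      exact hv ⟨by linear_combination n4*h1 - n2*h2 - v0*hdN,
                by linear_combination n1*h2 - n3*h1 - v1*hdN⟩
    obtain ⟨-, ku1, ku2⟩ := parab_uniq hdet htr' he2 hunz cu1 cu2
    obtain ⟨f, hf0, hf1⟩ := kerprop (n1*v0+n2*v1) (n3*v0+n4*v1) ku1 ku2
    refine ⟨f, ?_⟩
    rw [hN', mulVec2, smul_vec2]
    funext i
    fin_cases i
    · simpa using hf0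
    · simpa using hf1
  · -- X anticommutes with M : impossible
    exfalso
    have hpm' : (↟M) * (↟X) = -((↟X) * (↟M)) := by rw [hpm, neg_neg]
    rw [hX, hM, Matrix.mul_fin_two, Matrix.mul_fin_two] at hpm'
    rw [show -(!![p*a+q*c, p*b+q*d; r*a+s*c, r*b+s*d]) =
        !![-(p*a+q*c), -(p*b+q*d); -(r*a+s*c), -(r*b+s*d)] by
      ext i j; fin_cases i <;> fin_cases j <;> simp] at hpm'
    rw [mat2_eq_iff] at hpm'
    obtain ⟨G1, G2, G3, G4⟩ := hpm'
    have hwnz : ¬(p*v0+q*v1 = 0 ∧ r*v0+s*v1 = 0) := by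
      rintro ⟨h1, h2⟩
      exact hv ⟨by linear_combination s*h1 - q*h2 - v0*hdX,
                by linear_combination p*h2 - r*h1 - v1*hdX⟩
    have cw1 : a*(p*v0+q*v1) + b*(r*v0+s*v1) = (-ep)*(p*v0+q*v1) := by
      linear_combination v0*G1 + v1*G2 - p*ev1 - q*ev2
    have cw2 : c*(p*v0+q*v1) + d*(r*v0+s*v1) = (-ep)*(r*v0+s*v1) := by
      linear_combination v0*G3 + v1*G4 - r*ev1 - s*ev2
    obtain ⟨hte, -, -⟩ := parab_uniq hdet htr' he2 hwnz cw1 cw2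
    have h0 : ep = 0 := by linear_combination -(1/2 : ℂ)*hte
    rw [h0] at he2
    norm_num at he2

lemma coe_mul2 (A B : SL2) : (↟(A*B)) = (↟A) * (↟B) := rfl

lemma sq_eq_sq_cases {x y : ℂ} (h : x^2 = y^2) : x = y ∨ x = -y := by
  have : (x - y) * (x + y) = 0 := by linear_combination h
  rcases mul_eq_zero.mp this with h' | h'
  · left; linear_combination h'
  · right; linear_combination h'

lemma neg_mat2 (a b c d : ℂ) : -(!![a,b;c,d]) = !![-a,-b;-c,-d] := by
  ext i j; fin_cases i <;> fin_cases j <;> simp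

lemma one_mat2 : !![(1:ℂ),0;0,1] = (1 : Matrix (Fin 2) (Fin 2) ℂ) := by
  ext i j; fin_cases i <;> fin_cases j <;> simp [Matrix.one_apply]

lemma neg_one_mat2 : !![(-1:ℂ),0;0,-1] = -(1 : Matrix (Fin 2) (Fin 2) ℂ) := by
  ext i j; fin_cases i <;> fin_cases j <;> simp [Matrix.one_apply]

/-- the centralizer of {D, K} (a Klein four configuration) consists of 1, D, K, DK mod center -/
lemma centralizer_JK (mu : ℂ) (hmu : mu ≠ 0) (D K Z : SL2)
    (hD : (↟D) = !![Complex.I, 0; 0, -Complex.I])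
    (hK : (↟K) = !![0, mu; -mu⁻¹, 0])
    (h1 : (mk' Z) * (mk' D) = (mk' D) * (mk' Z))
    (h2 : (mk' Z) * (mk' K) = (mk' K) * (mk' Z)) :
    (mk' Z) = 1 ∨ (mk' Z) = (mk' D) ∨ (mk' Z) = (mk' K) ∨ (mk' Z) = (mk'(D*K)) := by
  have hmu' : mu * mu⁻¹ = 1 := mul_inv_cancel₀ hmu
  have hDK : (↟(D*K)) = !![0, Complex.I*mu; Complex.I*mu⁻¹, 0] := by
    rw [coe_mul2, hD, hK, Matrix.mul_fin_two, mat2_eq_iff]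
    exact ⟨by ring, by ring, by ring, by ring⟩
  rcases main_J D Z hD h1 with ⟨p, hp, hZ⟩ | ⟨q, hq, hZ⟩
  · -- Z diagonal
    have hp' : p * p⁻¹ = 1 := mul_inv_cancel₀ hp
    rcases comm_lift h2 with h | h
    · rw [hZ, hK, Matrix.mul_fin_two, Matrix.mul_fin_two, mat2_eq_iff] at h
      obtain ⟨-, e2, -, -⟩ := h
      have hp2 : p^2 = 1 := by
        linear_combination mu⁻¹*p*e2 - p^2*hmu' + p*p⁻¹*hmu' + hp'
      left
      rw [mk_eq_one]
      rcases sq_eq_one_iff.mp hp2 with h' | h'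
      · left; rw [hZ, h', inv_one, one_mat2]
      · right; rw [hZ, h', show ((-1:ℂ))⁻¹ = -1 by norm_num, neg_one_mat2]
    · rw [hZ, hK, Matrix.mul_fin_two, Matrix.mul_fin_two, neg_mat2, mat2_eq_iff] at h
      obtain ⟨-, e2, -, -⟩ := h
      have hp2 : p^2 = -1 := by
        linear_combination mu⁻¹*p*e2 - p^2*hmu' - p*p⁻¹*hmu' - hp'
      right; left
      rw [mk_eq_mk]
      have hI2 : p^2 = (Complex.I)^2 := by rw [Complex.I_sq, hp2]
      rcases sq_eq_sq_cases hI2 with h' | h'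
      · left; rw [hD, hZ, h', Complex.inv_I]
      · right
        rw [hD, hZ, h', show (-Complex.I)⁻¹ = Complex.I by rw [inv_neg, Complex.inv_I]; ring,
          neg_mat2]
        norm_num
  · -- Z antidiagonal
    have hq' : q * q⁻¹ = 1 := mul_inv_cancel₀ hq
    rcases comm_lift h2 with h | h
    · rw [hZ, hK, Matrix.mul_fin_two, Matrix.mul_fin_two, mat2_eq_iff] at h
      obtain ⟨e1, -, -, -⟩ := h
      have hq2 : q^2 = mu^2 := by
        linear_combination -q*mu*e1 - q^2*hmu' + mu^2*hq'
      right; right; left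
      rw [mk_eq_mk]
      rcases sq_eq_sq_cases hq2 with h' | h'
      · left; rw [hK, hZ, h']
      · right
        rw [hK, hZ, h', inv_neg, neg_mat2]
        norm_num
    · rw [hZ, hK, Matrix.mul_fin_two, Matrix.mul_fin_two, neg_mat2, mat2_eq_iff] at h
      obtain ⟨e1, -, -, -⟩ := h
      have hq2 : q^2 = -mu^2 := by
        linear_combination -q*mu*e1 - q^2*hmu' - mu^2*hq'
      right; right; right
      rw [mk_eq_mk]
      have hI2 : q^2 = (Complex.I*mu)^2 := by
        rw [mul_pow, Complex.I_sq, hq2]; ring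
      rcases sq_eq_sq_cases hI2 with h' | h'
      · left
        rw [hDK, hZ, h', show (Complex.I*mu)⁻¹ = -(Complex.I*mu⁻¹) by
          rw [mul_inv, Complex.inv_I]; ring]
        norm_num
      · right
        rw [hDK, hZ, h', show (-(Complex.I*mu))⁻¹ = Complex.I*mu⁻¹ by
          rw [inv_neg, mul_inv, Complex.inv_I]; ring, neg_mat2]
        norm_num

lemma mk_conj (P C : SL2) : (mk'(P*C*P⁻¹)) = (mk' P) * (mk' C) * (mk' P)⁻¹ := rfl

lemma conj_comm_aux {Γ : Type*} [Group Γ] (g n m : Γ) (h : (n*m*n⁻¹)*m = m*(n*m*n⁻¹)) :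
    ((g*n*g⁻¹)*(g*m*g⁻¹)*(g*n*g⁻¹)⁻¹) * (g*m*g⁻¹)
      = (g*m*g⁻¹) * ((g*n*g⁻¹)*(g*m*g⁻¹)*(g*n*g⁻¹)⁻¹) := by
  have e : (g*n*g⁻¹)*(g*m*g⁻¹)*(g*n*g⁻¹)⁻¹ = g*(n*m*n⁻¹)*g⁻¹ := by group
  rw [e]
  calc g*(n*m*n⁻¹)*g⁻¹*(g*m*g⁻¹) = g*((n*m*n⁻¹)*m)*g⁻¹ := by group
    _ = g*(m*(n*m*n⁻¹))*g⁻¹ := by rw [h]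
    _ = (g*m*g⁻¹)*(g*(n*m*n⁻¹)*g⁻¹) := by group

lemma conj_comm_aux2 {Γ : Type*} [Group Γ] (g n m : Γ) (h : n*m = m*n) :
    (g*n*g⁻¹)*(g*m*g⁻¹) = (g*m*g⁻¹)*(g*n*g⁻¹) := by
  calc (g*n*g⁻¹)*(g*m*g⁻¹) = g*(n*m)*g⁻¹ := by group
    _ = g*(m*n)*g⁻¹ := by rw [h]
    _ = (g*m*g⁻¹)*(g*n*g⁻¹) := by group

end SolvDih

open SolvDih

local notation "↟" M:max => ((M : SL2) : Matrix (Fin 2) (Fin 2) ℂ)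
local notation "mk'" M:max => (QuotientGroup.mk (M : SL2) : PSL2)

/-- Any irreducible representation of a solvable group into `PSL₂(ℂ)` with infinite
image has dihedral image. -/
theorem solvable_irreducible_infinite_image_isDihedral
    {G : Type*} [Group G] (hG : IsSolvable G) (ρ : G →* PSL2)
    (hirr : IsIrreducibleSubgroup ρ.range) (hinf : Infinite ρ.range) :
    IsDihedral ρ.range := by
  classical
  haveI : Group.IsSolvable G := hG
  haveI := hinf
  set H : Subgroup PSL2 := ρ.range with hHdef
  haveI hsolv : Group.IsSolvable ↥H := solvable_of_surjective ρ.rangeRestrict_surjective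
  -- minimal length of derived series
  have hex : ∃ n, derivedSeries ↥H n = ⊥ := hsolv.solvable
  have hnontriv : Nontrivial ↥H := by infer_instance
  have h0 : derivedSeries ↥H 0 ≠ ⊥ := by
    rw [derivedSeries_zero]
    intro htop
    obtain ⟨x, y, hxy⟩ := hnontriv
    have hx : x ∈ (⊥ : Subgroup ↥H) := htop ▸ Subgroup.mem_top x
    have hy : y ∈ (⊥ : Subgroup ↥H) := htop ▸ Subgroup.mem_top y
    rw [Subgroup.mem_bot] at hx hy
    exact hxy (hx.trans hy.symm)
  have hfind : derivedSeries ↥H (Nat.find hex) = ⊥ := Nat.find_spec hex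
  have hn0ne : Nat.find hex ≠ 0 := fun h => h0 (h ▸ hfind)
  obtain ⟨m, hm⟩ : ∃ m, Nat.find hex = m + 1 :=
    ⟨Nat.find hex - 1, (Nat.succ_pred_eq_of_pos (Nat.pos_of_ne_zero hn0ne)).symm⟩
  have hAne : derivedSeries ↥H m ≠ ⊥ := Nat.find_min hex (by omega)
  have hAcomm : ⁅derivedSeries ↥H m, derivedSeries ↥H m⁆ = ⊥ := by
    rw [← derivedSeries_succ]
    rw [hm] at hfind
    exact hfind
  set A : Subgroup PSL2 := (derivedSeries ↥H m).map H.subtype with hA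
  -- A is abelian
  have hab : ∀ x ∈ A, ∀ y ∈ A, x * y = y * x := by
    intro x hx y hy
    obtain ⟨x', hx', rfl⟩ := hx
    obtain ⟨y', hy', rfl⟩ := hy
    have hle := Subgroup.commutator_eq_bot_iff_le_centralizer.mp hAcomm
    have hmem := hle hx'
    rw [Subgroup.mem_centralizer_iff] at hmem
    have h2 : y' * x' = x' * y' := hmem y' hy'
    have := congrArg H.subtype h2.symm
    simpa [_root_.map_mul] using this
  -- A is normalized by H
  have hnorm : ∀ h ∈ H, ∀ x ∈ A, h * x * h⁻¹ ∈ A := by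
    intro h hh x hx
    obtain ⟨x', hx', rfl⟩ := hx
    have hN := derivedSeries_normal (G := ↥H) m
    have hconj := hN.conj_mem x' hx' ⟨h, hh⟩
    refine ⟨⟨h, hh⟩ * x' * ⟨h, hh⟩⁻¹, hconj, ?_⟩
    simp [_root_.map_mul]
  -- A is nontrivial
  have hAexists : ∃ x ∈ A, x ≠ (1 : PSL2) := by
    have : Nontrivial ↥(derivedSeries ↥H m) := by
      rcases (derivedSeries ↥H m).bot_or_nontrivial with h | h
      · exact absurd h hAne
      · exact h
    obtain ⟨x', hx', hne⟩ := (derivedSeries ↥H m).exists_ne_one_of_nontrivial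
    refine ⟨↑x', ⟨x', hx', rfl⟩, ?_⟩
    intro h1
    apply hne
    exact Subtype.ext (by simpa using h1)
  -- Case 1 : A contains a parabolic element : contradiction with irreducibility
  by_cases hpar : ∃ M : SL2, (mk' M) ∈ A ∧
      (Matrix.trace (↟M) = 2 ∨ Matrix.trace (↟M) = -2) ∧ (↟M) ≠ 1 ∧ (↟M) ≠ -1
  · exfalso
    obtain ⟨M, hMA, htr, hM1, hM2⟩ := hpar
    rcases htr with htr | htr
    · exact hirr (parab_contra H A hab hnorm M hMA 1 (by norm_num)
        (by rw [htr]; ring) (by rwa [one_smul]))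
    · exact hirr (parab_contra H A hab hnorm M hMA (-1) (by norm_num)
        (by rw [htr]; ring) (by rw [neg_smul, one_smul]; exact hM2))
  -- Case 2 : A contains an element with trace not in {0, 2, -2}
  by_cases hgen : ∃ M : SL2, (mk' M) ∈ A ∧ Matrix.trace (↟M) ≠ 0 ∧
      Matrix.trace (↟M) ≠ 2 ∧ Matrix.trace (↟M) ≠ -2
  · obtain ⟨M, hMA, ht0, ht2, htm2⟩ := hgen
    obtain ⟨s, hs⟩ : ∃ s : ℂ, s^2 = (Matrix.trace (↟M))^2 - 4 :=
      IsAlgClosed.exists_pow_nat_eq _ (by norm_num)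
    set t := Matrix.trace (↟M) with htdef
    set l := (t + s)/2 with hldef
    have hquad : l^2 - t*l + 1 = 0 := by
      have e : ((t+s)/2)^2 - t*((t+s)/2) + 1 = (s^2 - (t^2 - 4))/4 := by ring
      rw [hldef, e, hs]
      ring
    have hl0 : l ≠ 0 := by intro h; rw [h] at hquad; simp at hquad
    have hl1 : l^2 ≠ 1 := by
      intro h
      have htl : t*l = 2 := by linear_combination h - hquad
      rcases sq_eq_one_iff.mp h with h' | h'
      · rw [h'] at htl; apply ht2; linear_combination htl
      · rw [h'] at htl; apply htm2; linear_combination -htl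
    have hlm1 : l^2 ≠ -1 := by
      intro h
      have htl : t*l = 0 := by linear_combination h - hquad
      rcases mul_eq_zero.mp htl with h' | h'
      · exact ht0 h'
      · exact hl0 h'
    have hinv : l * l⁻¹ = 1 := mul_inv_cancel₀ hl0
    have hsum : Matrix.trace (↟M) = l + l⁻¹ := by
      rw [← htdef]
      linear_combination -l⁻¹*hquad + (l - t)*hinv
    obtain ⟨P, hP⟩ := diagonalize M l hl0 hl1 hsum
    refine ⟨mk' P, ?_⟩
    intro h hh
    obtain ⟨N0, rfl⟩ := QuotientGroup.mk_surjective h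
    have hx : (mk' N0) * (mk' M) * (mk' N0)⁻¹ ∈ A := hnorm _ hh _ hMA
    have hcommPSL : ((mk' N0) * (mk' M) * (mk' N0)⁻¹) * (mk' M)
        = (mk' M) * ((mk' N0) * (mk' M) * (mk' N0)⁻¹) := hab _ hx _ hMA
    have hcomm : (mk'((P*N0*P⁻¹)*(P*M*P⁻¹)*(P*N0*P⁻¹)⁻¹)) * (mk'(P*M*P⁻¹))
        = (mk'(P*M*P⁻¹)) * (mk'((P*N0*P⁻¹)*(P*M*P⁻¹)*(P*N0*P⁻¹)⁻¹)) := by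
      rw [show (mk'((P*N0*P⁻¹)*(P*M*P⁻¹)*(P*N0*P⁻¹)⁻¹))
          = (mk'(P*N0*P⁻¹)) * (mk'(P*M*P⁻¹)) * (mk'(P*N0*P⁻¹))⁻¹ from rfl,
        mk_conj P N0, mk_conj P M]
      exact conj_comm_aux _ _ _ hcommPSL
    have hda := main_generic l hl0 hl1 hlm1 (P*M*P⁻¹) (P*N0*P⁻¹) hP hcomm
    exact ⟨P*N0*P⁻¹, hda, (mk_conj P N0).symm⟩
  -- Case 3 : every noncentral lift of an element of A has trace 0
  push_neg at hpar hgen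
  have hall : ∀ M : SL2, (mk' M) ∈ A → (↟M) ≠ 1 → (↟M) ≠ -1 → Matrix.trace (↟M) = 0 := by
    intro M hMA h1 hm1
    by_contra h0
    have ht2 : Matrix.trace (↟M) ≠ 2 := by
      intro h2
      exact hm1 (hpar M hMA (Or.inl h2) h1)
    exact hm1 (hpar M hMA (Or.inr (hgen M hMA h0 ht2)) h1)
  obtain ⟨x, hxA, hx1⟩ := hAexists
  obtain ⟨M, rfl⟩ := QuotientGroup.mk_surjective x
  have hM1 : (↟M) ≠ 1 := fun h => hx1 (mk_eq_one.mpr (Or.inl h))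
  have hMm1 : (↟M) ≠ -1 := fun h => hx1 (mk_eq_one.mpr (Or.inr h))
  have htr0 : Matrix.trace (↟M) = 0 := hall M hxA hM1 hMm1
  have hI1 : (Complex.I)^2 ≠ 1 := by rw [Complex.I_sq]; norm_num
  have hsumI : Matrix.trace (↟M) = Complex.I + Complex.I⁻¹ := by
    rw [htr0, Complex.inv_I]; ring
  obtain ⟨P, hP⟩ := diagonalize M Complex.I Complex.I_ne_zero hI1 hsumI
  have hD' : (↟(P*M*P⁻¹)) = !![Complex.I, 0; 0, -Complex.I] := by
    rw [hP, Complex.inv_I]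
  -- every element of A, conjugated by P, commutes with D in PSL2
  have hcommA : ∀ C : SL2, (mk' C) ∈ A →
      (mk'(P*C*P⁻¹)) * (mk'(P*M*P⁻¹)) = (mk'(P*M*P⁻¹)) * (mk'(P*C*P⁻¹)) := by
    intro C hCA
    rw [mk_conj P C, mk_conj P M]
    exact conj_comm_aux2 _ _ _ (hab _ hCA _ hxA)
  -- classification of elements of A after conjugation
  have hdiagcase : ∀ C : SL2, (mk' C) ∈ A → (mk' C) ≠ 1 →
      (mk'(P*C*P⁻¹)) = (mk'(P*M*P⁻¹)) ∨
        ∃ q : ℂ, q ≠ 0 ∧ (↟(P*C*P⁻¹)) = !![0,q;-q⁻¹,0] := by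
    intro C hCA hC1
    rcases main_J (P*M*P⁻¹) (P*C*P⁻¹) hD' (hcommA C hCA) with ⟨p, hp, hC'⟩ | hanti
    · left
      have htrC : Matrix.trace (↟C) = 0 := hall C hCA
        (fun h => hC1 (mk_eq_one.mpr (Or.inl h))) (fun h => hC1 (mk_eq_one.mpr (Or.inr h)))
      have htrC' : Matrix.trace (↟(P*C*P⁻¹)) = 0 := by rw [SolvDih.trace_conj]; exact htrC
      rw [hC', Matrix.trace_fin_two_of] at htrC'
      have hp' : p*p⁻¹ = 1 := mul_inv_cancel₀ hp
      have hp2 : p^2 = (Complex.I)^2 := by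
        rw [Complex.I_sq]
        linear_combination p*htrC' - hp'
      rw [mk_eq_mk]
      rcases sq_eq_sq_cases hp2 with h' | h'
      · left; rw [hD', hC', h', Complex.inv_I]
      · right
        rw [hD', hC', h', show (-Complex.I)⁻¹ = Complex.I by rw [inv_neg, Complex.inv_I]; ring,
          neg_mat2]
        norm_num
    · right; exact hanti
  by_cases hanti : ∃ C : SL2, (mk' C) ∈ A ∧
      ∃ q : ℂ, q ≠ 0 ∧ (↟(P*C*P⁻¹)) = !![0,q;-q⁻¹,0]
  · -- Case 3b: A contains a Klein four group: H is finite, contradiction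
    exfalso
    obtain ⟨C, hCA, q, hq, hKform⟩ := hanti
    set T : Set PSL2 := {1, mk'(P*M*P⁻¹), mk'(P*C*P⁻¹), mk'((P*M*P⁻¹)*(P*C*P⁻¹))} with hT
    have hfinT : T.Finite := by
      apply Set.Finite.insert
      apply Set.Finite.insert
      apply Set.Finite.insert
      exact Set.finite_singleton _
    have hcent : ∀ w : PSL2, w*(mk'(P*M*P⁻¹))*w⁻¹ = (mk'(P*M*P⁻¹)) →
        w*(mk'(P*C*P⁻¹))*w⁻¹ = (mk'(P*C*P⁻¹)) → w ∈ T := by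
      intro w h1 h2
      obtain ⟨Z, rfl⟩ := QuotientGroup.mk_surjective w
      have h1' : (mk' Z)*(mk'(P*M*P⁻¹)) = (mk'(P*M*P⁻¹))*(mk' Z) := by
        calc (mk' Z)*(mk'(P*M*P⁻¹)) = ((mk' Z)*(mk'(P*M*P⁻¹))*(mk' Z)⁻¹)*(mk' Z) := by group
          _ = (mk'(P*M*P⁻¹))*(mk' Z) := by rw [h1]
      have h2' : (mk' Z)*(mk'(P*C*P⁻¹)) = (mk'(P*C*P⁻¹))*(mk' Z) := by
        calc (mk' Z)*(mk'(P*C*P⁻¹)) = ((mk' Z)*(mk'(P*C*P⁻¹))*(mk' Z)⁻¹)*(mk' Z) := by group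
          _ = (mk'(P*C*P⁻¹))*(mk' Z) := by rw [h2]
      rcases centralizer_JK q hq (P*M*P⁻¹) (P*C*P⁻¹) Z hD' hKform h1' h2' with h|h|h|h <;> rw [h]
      · exact Set.mem_insert _ _
      · exact Set.mem_insert_of_mem _ (Set.mem_insert _ _)
      · exact Set.mem_insert_of_mem _ (Set.mem_insert_of_mem _ (Set.mem_insert _ _))
      · exact Set.mem_insert_of_mem _ (Set.mem_insert_of_mem _ (Set.mem_insert_of_mem _ rfl))
    -- conjugated elements of A lie in T
    have hAT : ∀ c' ∈ A, (mk' P)*c'*(mk' P)⁻¹ ∈ T := by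
      intro c' hc'
      obtain ⟨Z0, rfl⟩ := QuotientGroup.mk_surjective c'
      have hcd := hcommA Z0 hc'
      have hck : (mk'(P*Z0*P⁻¹))*(mk'(P*C*P⁻¹)) = (mk'(P*C*P⁻¹))*(mk'(P*Z0*P⁻¹)) := by
        rw [mk_conj P Z0, mk_conj P C]
        exact conj_comm_aux2 _ _ _ (hab _ hc' _ hCA)
      rw [← mk_conj P Z0]
      rcases centralizer_JK q hq (P*M*P⁻¹) (P*C*P⁻¹) (P*Z0*P⁻¹) hD' hKform
        hcd hck with h|h|h|h <;> rw [h]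
      · exact Set.mem_insert _ _
      · exact Set.mem_insert_of_mem _ (Set.mem_insert _ _)
      · exact Set.mem_insert_of_mem _ (Set.mem_insert_of_mem _ (Set.mem_insert _ _))
      · exact Set.mem_insert_of_mem _ (Set.mem_insert_of_mem _ (Set.mem_insert_of_mem _ rfl))
    -- the image of H under conjugation by P is finite
    have hSD : ∀ h ∈ H, ((mk' P)*h*(mk' P)⁻¹)*(mk'(P*M*P⁻¹))*((mk' P)*h*(mk' P)⁻¹)⁻¹ ∈ T ∧
        ((mk' P)*h*(mk' P)⁻¹)*(mk'(P*C*P⁻¹))*((mk' P)*h*(mk' P)⁻¹)⁻¹ ∈ T := by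
      intro h hh
      constructor
      · have e : ((mk' P)*h*(mk' P)⁻¹)*(mk'(P*M*P⁻¹))*((mk' P)*h*(mk' P)⁻¹)⁻¹
            = (mk' P)*(h*(mk' M)*h⁻¹)*(mk' P)⁻¹ := by
          rw [mk_conj P M]; group
        rw [e]
        exact hAT _ (hnorm h hh _ hxA)
      · have e : ((mk' P)*h*(mk' P)⁻¹)*(mk'(P*C*P⁻¹))*((mk' P)*h*(mk' P)⁻¹)⁻¹
            = (mk' P)*(h*(mk' C)*h⁻¹)*(mk' P)⁻¹ := by
          rw [mk_conj P C]; group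
        rw [e]
        exact hAT _ (hnorm h hh _ hCA)
    set S : Set PSL2 := (fun w => (mk' P)*w*(mk' P)⁻¹) '' (H : Set PSL2) with hS
    have hSfin : S.Finite := by
      have hsub : S ⊆ ⋃ u ∈ T ×ˢ T,
          {w | w ∈ S ∧ w*(mk'(P*M*P⁻¹))*w⁻¹ = u.1 ∧ w*(mk'(P*C*P⁻¹))*w⁻¹ = u.2} := by
        rintro w ⟨h, hh, rfl⟩
        have := hSD h hh
        exact Set.mem_biUnion (Set.mk_mem_prod this.1 this.2) ⟨⟨h, hh, rfl⟩, rfl, rfl⟩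
      refine Set.Finite.subset (Set.Finite.biUnion (hfinT.prod hfinT) ?_) hsub
      rintro ⟨u1, u2⟩ -
      by_cases hne : {w | w ∈ S ∧ w*(mk'(P*M*P⁻¹))*w⁻¹ = u1 ∧
          w*(mk'(P*C*P⁻¹))*w⁻¹ = u2}.Nonempty
      · obtain ⟨w0, hw0S, hw01, hw02⟩ := hne
        refine Set.Finite.subset (hfinT.image (fun u => w0*u)) ?_
        rintro w ⟨hwS, hw1, hw2⟩
        refine ⟨w0⁻¹*w, ?_, by group⟩
        apply hcent
        · have e : w*(mk'(P*M*P⁻¹))*w⁻¹ = w0*(mk'(P*M*P⁻¹))*w0⁻¹ := by rw [hw1, hw01]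
          calc (w0⁻¹*w)*(mk'(P*M*P⁻¹))*(w0⁻¹*w)⁻¹
              = w0⁻¹*(w*(mk'(P*M*P⁻¹))*w⁻¹)*w0 := by group
            _ = w0⁻¹*(w0*(mk'(P*M*P⁻¹))*w0⁻¹)*w0 := by rw [e]
            _ = (mk'(P*M*P⁻¹)) := by group
        · have e : w*(mk'(P*C*P⁻¹))*w⁻¹ = w0*(mk'(P*C*P⁻¹))*w0⁻¹ := by rw [hw2, hw02]
          calc (w0⁻¹*w)*(mk'(P*C*P⁻¹))*(w0⁻¹*w)⁻¹
              = w0⁻¹*(w*(mk'(P*C*P⁻¹))*w⁻¹)*w0 := by group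
            _ = w0⁻¹*(w0*(mk'(P*C*P⁻¹))*w0⁻¹)*w0 := by rw [e]
            _ = (mk'(P*C*P⁻¹)) := by group
      · rw [Set.not_nonempty_iff_eq_empty] at hne
        rw [hne]
        exact Set.finite_empty
    have hHfin : (H : Set PSL2).Finite := by
      have hsub : (H : Set PSL2) ⊆ (fun w => (mk' P)⁻¹*w*(mk' P)) '' S := by
        intro h hh
        exact ⟨(mk' P)*h*(mk' P)⁻¹, ⟨h, hh, rfl⟩, by group⟩
      exact Set.Finite.subset (hSfin.image _) hsub
    exact absurd hHfin (Set.infinite_coe_iff.mp hinf)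
  · -- Case 3a: A = {1, x} : H centralizes x, so H is diagonal/antidiagonal
    push_neg at hanti
    refine ⟨mk' P, ?_⟩
    intro h hh
    obtain ⟨N0, rfl⟩ := QuotientGroup.mk_surjective h
    have hxh : (mk'(N0*M*N0⁻¹)) ∈ A := hnorm _ hh _ hxA
    have hxh1 : (mk'(N0*M*N0⁻¹)) ≠ 1 := by
      intro hcon
      apply hx1
      have e : (mk'(N0*M*N0⁻¹)) = (mk' N0) * (mk' M) * (mk' N0)⁻¹ := rfl
      rw [e] at hcon
      exact conj_eq_one_iff.mp hcon
    have key : (mk'(P*(N0*M*N0⁻¹)*P⁻¹)) = (mk'(P*M*P⁻¹)) := by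
      rcases hdiagcase (N0*M*N0⁻¹) hxh hxh1 with h' | ⟨q, hq, hform⟩
      · exact h'
      · exact absurd hform (hanti (N0*M*N0⁻¹) hxh q hq)
    -- cancel: N0 commutes with M in PSL2
    have hnm : (mk' N0) * (mk' M) = (mk' M) * (mk' N0) := by
      rw [mk_conj P _, mk_conj P M] at key
      have h4 : (mk'(N0*M*N0⁻¹)) = (mk' M) := by
        have := mul_left_cancel (mul_right_cancel key)
        exact this
      have e : (mk'(N0*M*N0⁻¹)) = (mk' N0) * (mk' M) * (mk' N0)⁻¹ := rfl
      rw [e] at h4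
      calc (mk' N0) * (mk' M) = ((mk' N0) * (mk' M) * (mk' N0)⁻¹) * (mk' N0) := by group
        _ = (mk' M) * (mk' N0) := by rw [h4]
    have hcommND : (mk'(P*N0*P⁻¹)) * (mk'(P*M*P⁻¹)) = (mk'(P*M*P⁻¹)) * (mk'(P*N0*P⁻¹)) := by
      rw [mk_conj P N0, mk_conj P M]
      exact conj_comm_aux2 _ _ _ hnm
    have hda := main_J (P*M*P⁻¹) (P*N0*P⁻¹) hD' hcommND
    exact ⟨P*N0*P⁻¹, hda, (mk_conj P N0).symm⟩
end
end

section
/- For every u ∈ ℂ with u ∉ {0, 1, −1}, the following two triples of matrices, regarded as elements of PSL₂(ℂ), satisfy the relations A·C·A = C·A·C, B·C = C·B and (A·B)² = (B·A)²: (1) A = [[u⁻¹,1],[0,u]], B = [[u²,0],[−(u+u⁻¹),u⁻²]], C = [[u,0],[−1,u⁻¹]]; (2) A = [[u,1],[0,u⁻¹]], B = [[u²,0],[−(u²+1)(u⁴−u²+1)/u³, u⁻²]], C = [[u,0],[−(u⁴−u²+1)/u², u⁻¹]]. (These give one-parameter families of representations of the group Γ₃′ = ⟨a,b,c | aca = cac,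 [b,c] = 1, (ab)² = (ba)²⟩ into PSL₂(ℂ).) -/
/-- The element of `SL₂(ℂ)` with entries `a b c d`, given a proof of determinant one. -/
def mk2 (a b c d : ℂ) (h : a * d - b * c = 1) : SL2 :=
  ⟨!![a, b; c, d], by rw [Matrix.det_fin_two_of]; exact h⟩

lemma fin2_ext {a b c d a' b' c' d' : ℂ} (h1 : a = a') (h2 : b = b')
    (h3 : c = c') (h4 : d = d') : !![a, b; c, d] = !![a', b'; c', d'] := by
  subst h1 h2 h3 h4; rfl

lemma coe_mk2 (a b c d : ℂ) (h : a * d - b * c = 1) :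
    (mk2 a b c d h : Matrix (Fin 2) (Fin 2) ℂ) = !![a, b; c, d] := rfl

set_option maxHeartbeats 1000000 in
/-- For `u ∉ {0, 1, −1}`, the two explicit triples of matrices, viewed in `PSL₂(ℂ)`,
satisfy the relations `ACA = CAC`, `BC = CB` and `(AB)² = (BA)²` of the group
`Γ₃′ = ⟨a,b,c | aca = cac, [b,c] = 1, (ab)² = (ba)²⟩`. -/
theorem Gamma3'_families (u : ℂ) (hu : u ≠ 0) (hu1 : u ≠ 1) (hu2 : u ≠ -1) :
    (let A : PSL2 := QuotientGroup.mk (mk2 u⁻¹ 1 0 u (by field_simp; ring))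
     let B : PSL2 := QuotientGroup.mk (mk2 (u ^ 2) 0 (-(u + u⁻¹)) (u ^ 2)⁻¹
       (by field_simp; ring))
     let C : PSL2 := QuotientGroup.mk (mk2 u 0 (-1) u⁻¹ (by field_simp; ring))
     A * C * A = C * A * C ∧ B * C = C * B ∧ (A * B) ^ 2 = (B * A) ^ 2) ∧
    (let A : PSL2 := QuotientGroup.mk (mk2 u 1 0 u⁻¹ (by field_simp; ring))
     let B : PSL2 := QuotientGroup.mk (mk2 (u ^ 2) 0
       (-((u ^ 2 + 1) * (u ^ 4 - u ^ 2 + 1) / u ^ 3)) (u ^ 2)⁻¹ (by field_simp; ring))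
     let C : PSL2 := QuotientGroup.mk (mk2 u 0 (-((u ^ 4 - u ^ 2 + 1) / u ^ 2)) u⁻¹
       (by field_simp; ring))
     A * C * A = C * A * C ∧ B * C = C * B ∧ (A * B) ^ 2 = (B * A) ^ 2) := by
  refine ⟨⟨?_, ?_, ?_⟩, ?_, ?_, ?_⟩ <;>
  · simp only [pow_two, ← QuotientGroup.mk_mul]
    refine congrArg QuotientGroup.mk (Subtype.ext ?_)
    simp only [Matrix.SpecialLinearGroup.coe_mul, coe_mk2, Matrix.mul_fin_two]
    refine fin2_ext ?_ ?_ ?_ ?_ <;> (try rfl) <;> (try ring1) <;> (try field_simp) <;> (try ring1) <;>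
      (try rw [add_div' _ _ _ (by field_simp)]) <;>
      (try rw [div_eq_div_iff (by field_simp) (by field_simp)]) <;>
      (try rw [div_eq_iff (by field_simp)]) <;> ring1
end

section
/- For all u, v ∈ ℂ with u ≠ 0 and v ≠ 0, the matrices A = [[0,1],[−1,0]], B = [[u,0],[0,u⁻¹]], C = [[v,0],[0,v⁻¹]] in SL₂(ℂ) satisfy (A·B)² = (B·A)², (A·C)² = (C·A)² and B·C = C·B. (Hence a ↦ A, b ↦ B, c ↦ C defines a two-parameter family of representations into SL₂(ℂ) of the group Γ₂′ = ⟨a,b,c | (ab)²(ba)⁻² = (ac)²(ca)⁻² = [b,c] = 1⟩, the fundamental group of the complement of three lines tangent to a conic.) -/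
/-- For nonzero `u, v`, the matrices `A = [[0,1],[−1,0]]`, `B = [[u,0],[0,u⁻¹]]`,
`C = [[v,0],[0,v⁻¹]]` satisfy `(AB)² = (BA)²`, `(AC)² = (CA)²` and `BC = CB`: a
two-parameter family of representations into `SL₂(ℂ)` of
`Γ₂′ = ⟨a,b,c | (ab)²(ba)⁻² = (ac)²(ca)⁻² = [b,c] = 1⟩`, the fundamental group of the
complement of three lines tangent to a conic. -/
theorem Gamma2'_family (u v : ℂ) (hu : u ≠ 0) (hv : v ≠ 0) :
    let A : SL2 := mk2 0 1 (-1) 0 (by norm_num)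
    let B : SL2 := mk2 u 0 0 u⁻¹ (by field_simp; norm_num)
    let C : SL2 := mk2 v 0 0 v⁻¹ (by field_simp; norm_num)
    (A * B) ^ 2 = (B * A) ^ 2 ∧ (A * C) ^ 2 = (C * A) ^ 2 ∧ B * C = C * B := by
  intro A B C
  refine ⟨?_, ?_, ?_⟩ <;>
  · apply Subtype.ext
    simp only [A, B, C, Matrix.SpecialLinearGroup.coe_mul, Matrix.SpecialLinearGroup.coe_pow]
    simp only [mk2]
    ext i j
    fin_cases i <;> fin_cases j <;>
      simp [pow_two, Matrix.mul_apply, Fin.sum_univ_two, mul_comm]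
end

section
/- For every s ∈ ℂ with s ≠ 0, there exists an element g of the subgroup of the group of bijections of (SL₂(ℂ))⁴ generated by β₁, β₂, β₃ such that χ(g(ρ₂(s, s))) = χ(ρ₄(s)), where ρ₂(u,v) := (J, D(v), D(u), D(v)) and ρ₄(s) := (J, D(s), D(s), D(s⁻¹)) in (SL₂(ℂ))⁴. (This is the statement that the full mapping class group orbit of the class of ρ₄ with parameter s is a special case of the orbit of ρ₂ with parameters (u,v) = (s, s).) -/
noncomputable section

/-- The matrix `J = [[0,1],[−1,0]]` in `SL₂(ℂ)`. -/
def J : SL2 := mk2 0 1 (-1) 0 (by norm_num)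

/-- The diagonal matrix `D(u) = [[u,0],[0,u⁻¹]]` in `SL₂(ℂ)`, for `u ≠ 0`. -/
def D (u : ℂ) (hu : u ≠ 0) : SL2 := mk2 u 0 0 u⁻¹ (by field_simp; norm_num)

/-- Quadruples of elements of `SL₂(ℂ)`. -/
abbrev S4 : Type := SL2 × SL2 × SL2 × SL2

/-- The braid/Hurwitz action of `σ₁` as a bijection of `S4`. -/
def β1 : Equiv.Perm S4 where
  toFun M := (M.1 * M.2.1 * M.1⁻¹, M.1, M.2.2.1, M.2.2.2)
  invFun N := (N.2.1, N.2.1⁻¹ * N.1 * N.2.1, N.2.2.1, N.2.2.2)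
  left_inv := by rintro ⟨a, b, c, d⟩; simp [mul_assoc]
  right_inv := by rintro ⟨a, b, c, d⟩; simp [mul_assoc]

/-- The braid/Hurwitz action of `σ₂` as a bijection of `S4`. -/
def β2 : Equiv.Perm S4 where
  toFun M := (M.1, M.2.1 * M.2.2.1 * M.2.1⁻¹, M.2.1, M.2.2.2)
  invFun N := (N.1, N.2.2.1, N.2.2.1⁻¹ * N.2.1 * N.2.2.1, N.2.2.2)
  left_inv := by rintro ⟨a, b, c, d⟩; simp [mul_assoc]
  right_inv := by rintro ⟨a, b, c, d⟩; simp [mul_assoc]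

/-- The braid/Hurwitz action of `σ₃` as a bijection of `S4`. -/
def β3 : Equiv.Perm S4 where
  toFun M := (M.1, M.2.1, M.2.2.1 * M.2.2.2 * M.2.2.1⁻¹, M.2.2.1)
  invFun N := (N.1, N.2.1, N.2.2.2, N.2.2.2⁻¹ * N.2.2.1 * N.2.2.2)
  left_inv := by rintro ⟨a, b, c, d⟩; simp [mul_assoc]
  right_inv := by rintro ⟨a, b, c, d⟩; simp [mul_assoc]

/-- The subgroup of bijections of `S4` generated by the images of the standard
generators of the pure braid group `PB₄`. -/
def P : Subgroup (Equiv.Perm S4) :=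
  Subgroup.closure {β1 ^ 2, β2 ^ 2, β3 ^ 2,
    β2 * β1 ^ 2 * β2⁻¹, β3 * β2 ^ 2 * β3⁻¹, β3 * β2 * β1 ^ 2 * β2⁻¹ * β3⁻¹}

/-- The trace of an element of `SL₂(ℂ)`. -/
def tr (A : SL2) : ℂ := Matrix.trace (A : Matrix (Fin 2) (Fin 2) ℂ)

/-- The 15 trace coordinates on `S4` determining a point of the character variety
`Char(0,5)`. -/
def χ (M : S4) : Fin 15 → ℂ :=
  ![tr M.1, tr M.2.1, tr M.2.2.1, tr M.2.2.2,
    tr (M.1 * M.2.1 * M.2.2.1 * M.2.2.2),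
    tr (M.1 * M.2.1), tr (M.1 * M.2.2.1), tr (M.1 * M.2.2.2),
    tr (M.2.1 * M.2.2.1), tr (M.2.1 * M.2.2.2), tr (M.2.2.1 * M.2.2.2),
    tr (M.1 * M.2.1 * M.2.2.1), tr (M.1 * M.2.1 * M.2.2.2),
    tr (M.1 * M.2.2.1 * M.2.2.2), tr (M.2.1 * M.2.2.1 * M.2.2.2)]

/-- The subgroup of bijections of `S4` generated by `β₁, β₂, β₃` (the image of the full
braid group `B₄`). -/
def FullB : Subgroup (Equiv.Perm S4) := Subgroup.closure {β1, β2, β3}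

lemma mk2_mul (a b c d a' b' c' d' : ℂ) (h h') :
    mk2 a b c d h * mk2 a' b' c' d' h' =
    mk2 (a*a'+b*c') (a*b'+b*d') (c*a'+d*c') (c*b'+d*d')
      (by rw [show (a*a'+b*c')*(c*b'+d*d') - (a*b'+b*d')*(c*a'+d*c')
            = (a*d-b*c)*(a'*d'-b'*c') from by ring, h, h', mul_one]) := by
  apply Subtype.ext
  show (!![a,b;c,d] : Matrix (Fin 2) (Fin 2) ℂ) * !![a',b';c',d'] = _
  rw [Matrix.mul_fin_two]; rfl

lemma mk2_inv (a b c d : ℂ) (h) :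
    (mk2 a b c d h)⁻¹ = mk2 d (-b) (-c) a (by linear_combination h) := by
  apply Subtype.ext
  show Matrix.adjugate _ = _
  show Matrix.adjugate !![a,b;c,d] = _
  rw [Matrix.adjugate_fin_two_of]; rfl

lemma mk2_congr (a b c d a' b' c' d' : ℂ) (h h') (ha : a = a') (hb : b = b')
    (hc : c = c') (hd : d = d') : mk2 a b c d h = mk2 a' b' c' d' h' := by
  subst ha hb hc hd; rfl

lemma tr_mk2 (a b c d : ℂ) (h) : tr (mk2 a b c d h) = a + d := by
  show Matrix.trace !![a,b;c,d] = a + d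
  rw [Matrix.trace_fin_two_of]

lemma χ_congr_first (A B M2 M3 M4 : SL2) (h0 : tr A = tr B)
    (h4 : tr (A * M2 * M3 * M4) = tr (B * M2 * M3 * M4))
    (h5 : tr (A * M2) = tr (B * M2)) (h6 : tr (A * M3) = tr (B * M3))
    (h7 : tr (A * M4) = tr (B * M4))
    (h11 : tr (A * M2 * M3) = tr (B * M2 * M3))
    (h12 : tr (A * M2 * M4) = tr (B * M2 * M4))
    (h13 : tr (A * M3 * M4) = tr (B * M3 * M4)) :
    χ (A, M2, M3, M4) = χ (B, M2, M3, M4) := by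
  unfold χ
  rw [h0, h4, h5, h6, h7, h11, h12, h13]

/-- The full mapping class group orbit of the class of
`ρ₄(s) = (J, D(s), D(s), D(s⁻¹))` is a special case of the orbit of
`ρ₂(u,v) = (J, D(v), D(u), D(v))` with `(u,v) = (s, s)`. -/
theorem rho4_orbit_specializes_rho2 (s : ℂ) (hs : s ≠ 0) :
    ∃ g ∈ FullB,
      χ (g (J, D s hs, D s hs, D s hs)) =
      χ (J, D s hs, D s hs, D s⁻¹ (inv_ne_zero hs)) := by
  refine ⟨β3 * β2 * β1 * β1, ?_, ?_⟩
  · have h1 : β1 ∈ FullB := Subgroup.subset_closure (by simp)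
    have h2 : β2 ∈ FullB := Subgroup.subset_closure (by simp)
    have h3 : β3 ∈ FullB := Subgroup.subset_closure (by simp)
    exact mul_mem (mul_mem (mul_mem h3 h2) h1) h1
  · have happ : (β3 * β2 * β1 * β1) (J, D s hs, D s hs, D s hs) =
        ((J*D s hs*J⁻¹)*J*(J*D s hs*J⁻¹)⁻¹, (J*D s hs*J⁻¹)*(D s hs)*(J*D s hs*J⁻¹)⁻¹,
         (J*D s hs*J⁻¹)*(D s hs)*(J*D s hs*J⁻¹)⁻¹, J*D s hs*J⁻¹) := rfl
    have hx : J * D s hs * J⁻¹ = D s⁻¹ (inv_ne_zero hs) := by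
      simp only [J, D, mk2_mul, mk2_inv]
      apply mk2_congr <;> field_simp <;> ring
    have hd : D s⁻¹ (inv_ne_zero hs) * D s hs * (D s⁻¹ (inv_ne_zero hs))⁻¹ = D s hs := by
      simp only [D, mk2_mul, mk2_inv]
      apply mk2_congr <;> field_simp <;> ring
    have hk : D s⁻¹ (inv_ne_zero hs) * J * (D s⁻¹ (inv_ne_zero hs))⁻¹ =
        mk2 0 (s⁻¹*s⁻¹) (-(s*s)) 0 (by field_simp; ring) := by
      simp only [J, D, mk2_mul, mk2_inv]
      apply mk2_congr <;> field_simp <;> ring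
    rw [happ, hx, hd, hk]
    apply χ_congr_first <;>
      · simp only [J, D, mk2_mul, tr_mk2]
        try ring
end
end

section
/- For all u, v, u′, v′ ∈ ℂ with u, v, u′, v′ ≠ 0 and all g, h ∈ P, one has χ(g(ρ₁(u,v))) ≠ χ(h(ρ₂(u′,v′))), where ρ₁(u,v) := (D(v), D(u), J, [[0,u²],[−u⁻²,0]]) and ρ₂(u′,v′) := (J, D(v′), D(u′), D(v′)) in (SL₂(ℂ))⁴. (This is the statement that the families ρ₁ and ρ₂ give pairwise distinct pure mapping class group orbits in the character variety Char(0,5).) -/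
noncomputable section

/-- The product of the four entries of a quadruple. -/
def prod4 (M : S4) : SL2 := M.1 * M.2.1 * M.2.2.1 * M.2.2.2

/-- The key invariance property: a bijection conjugates each entry and
preserves the total product. -/
def Pred (g : Equiv.Perm S4) : Prop :=
  ∀ M : S4, IsConj M.1 (g M).1 ∧ IsConj M.2.1 (g M).2.1 ∧
    IsConj M.2.2.1 (g M).2.2.1 ∧ IsConj M.2.2.2 (g M).2.2.2 ∧
    prod4 (g M) = prod4 M

lemma pred_one : Pred 1 := by
  rintro ⟨a, b, c, d⟩
  exact ⟨IsConj.refl _, IsConj.refl _, IsConj.refl _, IsConj.refl _, rfl⟩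

lemma pred_mul {g h : Equiv.Perm S4} (hg : Pred g) (hh : Pred h) : Pred (g * h) := by
  intro M
  obtain ⟨h1, h2, h3, h4, h5⟩ := hh M
  obtain ⟨g1, g2, g3, g4, g5⟩ := hg (h M)
  exact ⟨h1.trans g1, h2.trans g2, h3.trans g3, h4.trans g4, g5.trans h5⟩

lemma pred_inv {g : Equiv.Perm S4} (hg : Pred g) : Pred g⁻¹ := by
  intro M
  obtain ⟨g1, g2, g3, g4, g5⟩ := hg (g⁻¹ M)
  rw [show g (g⁻¹ M) = M from g.apply_symm_apply M] at g1 g2 g3 g4 g5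
  exact ⟨g1.symm, g2.symm, g3.symm, g4.symm, g5.symm⟩

lemma pred_gen1 : Pred (β1 ^ 2) := by
  rintro ⟨a, b, c, d⟩
  simp only [sq, Equiv.Perm.mul_apply, β1, Equiv.coe_fn_mk, prod4]
  exact ⟨isConj_iff.mpr ⟨a * b * a⁻¹, by group⟩, isConj_iff.mpr ⟨a, by group⟩,
    isConj_iff.mpr ⟨1, by group⟩, isConj_iff.mpr ⟨1, by group⟩, by group⟩

lemma pred_gen2 : Pred (β2 ^ 2) := by
  rintro ⟨a, b, c, d⟩
  simp only [sq, Equiv.Perm.mul_apply, β2, Equiv.coe_fn_mk, prod4]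
  exact ⟨isConj_iff.mpr ⟨1, by group⟩, isConj_iff.mpr ⟨b * c * b⁻¹, by group⟩,
    isConj_iff.mpr ⟨b, by group⟩, isConj_iff.mpr ⟨1, by group⟩, by group⟩

lemma pred_gen3 : Pred (β3 ^ 2) := by
  rintro ⟨a, b, c, d⟩
  simp only [sq, Equiv.Perm.mul_apply, β3, Equiv.coe_fn_mk, prod4]
  exact ⟨isConj_iff.mpr ⟨1, by group⟩, isConj_iff.mpr ⟨1, by group⟩,
    isConj_iff.mpr ⟨c * d * c⁻¹, by group⟩, isConj_iff.mpr ⟨c, by group⟩, by group⟩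

lemma pred_gen4 : Pred (β2 * β1 ^ 2 * β2⁻¹) := by
  rintro ⟨a, b, c, d⟩
  simp only [sq, Equiv.Perm.mul_apply, β1, β2, Equiv.coe_fn_mk, Equiv.Perm.inv_def,
    Equiv.coe_fn_symm_mk, prod4]
  exact ⟨isConj_iff.mpr ⟨a * c * a⁻¹, by group⟩, isConj_iff.mpr ⟨a * c * a⁻¹ * c⁻¹, by group⟩,
    isConj_iff.mpr ⟨a, by group⟩, isConj_iff.mpr ⟨1, by group⟩, by group⟩

lemma pred_gen5 : Pred (β3 * β2 ^ 2 * β3⁻¹) := by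
  rintro ⟨a, b, c, d⟩
  simp only [sq, Equiv.Perm.mul_apply, β2, β3, Equiv.coe_fn_mk, Equiv.Perm.inv_def,
    Equiv.coe_fn_symm_mk, prod4]
  exact ⟨isConj_iff.mpr ⟨1, by group⟩, isConj_iff.mpr ⟨b * d * b⁻¹, by group⟩,
    isConj_iff.mpr ⟨b * d * b⁻¹ * d⁻¹, by group⟩, isConj_iff.mpr ⟨b, by group⟩, by group⟩

lemma pred_gen6 : Pred (β3 * β2 * β1 ^ 2 * β2⁻¹ * β3⁻¹) := by
  rintro ⟨a, b, c, d⟩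
  simp only [sq, Equiv.Perm.mul_apply, β1, β2, β3, Equiv.coe_fn_mk, Equiv.Perm.inv_def,
    Equiv.coe_fn_symm_mk, prod4]
  exact ⟨isConj_iff.mpr ⟨a * d * a⁻¹, by group⟩, isConj_iff.mpr ⟨a * d * a⁻¹ * d⁻¹, by group⟩,
    isConj_iff.mpr ⟨a * d * a⁻¹ * d⁻¹, by group⟩, isConj_iff.mpr ⟨a, by group⟩, by group⟩

lemma pred_of_mem {g : Equiv.Perm S4} (hg : g ∈ P) : Pred g := by
  refine Subgroup.closure_induction ?_ pred_one (fun x y _ _ => pred_mul)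
    (fun x _ => pred_inv) hg
  intro x hx
  simp only [Set.mem_insert_iff, Set.mem_singleton_iff] at hx
  rcases hx with rfl | rfl | rfl | rfl | rfl | rfl
  exacts [pred_gen1, pred_gen2, pred_gen3, pred_gen4, pred_gen5, pred_gen6]

lemma tr_conj {A B : SL2} (h : IsConj A B) : tr A = tr B := by
  obtain ⟨c, hc⟩ := isConj_iff.mp h
  rw [← hc]
  unfold tr
  simp only [Matrix.SpecialLinearGroup.coe_mul]
  rw [Matrix.trace_mul_cycle, ← Matrix.SpecialLinearGroup.coe_mul,
    ← Matrix.SpecialLinearGroup.coe_mul]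
  congr 2
  group
  rfl

lemma rho1_rho2_aux (u v u' v' : ℂ)
    (hu : u ≠ 0) (hv : v ≠ 0) (hu' : u' ≠ 0) (hv' : v' ≠ 0)
    (g h : Equiv.Perm S4) (hg : g ∈ P) (hh : h ∈ P)
    (pf : (0 : ℂ) * 0 - u ^ 2 * -(u ^ 2)⁻¹ = 1) :
    χ (g (D v hv, D u hu, J, mk2 0 (u ^ 2) (-(u ^ 2)⁻¹) 0 pf)) ≠
    χ (h (J, D v' hv', D u' hu', D v' hv')) := by
  intro heq
  obtain ⟨g1, g2, g3, g4, g5⟩ :=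
    pred_of_mem hg (D v hv, D u hu, J, mk2 0 (u ^ 2) (-(u ^ 2)⁻¹) 0 pf)
  obtain ⟨k1, k2, k3, k4, k5⟩ := pred_of_mem hh (J, D v' hv', D u' hu', D v' hv')
  have e0 := congrFun heq 0
  have e1 := congrFun heq 1
  have e2 := congrFun heq 2
  have e3 := congrFun heq 3
  have e4 := congrFun heq 4
  simp only [χ] at e0 e1 e2 e3 e4
  simp at e0 e1 e2 e3 e4
  rw [← tr_conj g1, ← tr_conj k1] at e0
  rw [← tr_conj g2, ← tr_conj k2] at e1
  rw [← tr_conj g3, ← tr_conj k3] at e2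
  rw [← tr_conj g4, ← tr_conj k4] at e3
  have e4' : tr (prod4 (D v hv, D u hu, J, mk2 0 (u ^ 2) (-(u ^ 2)⁻¹) 0 pf)) =
      tr (prod4 (J, D v' hv', D u' hu', D v' hv')) := by
    rw [← g5, ← k5]; simpa only [prod4] using e4
  simp only [tr, prod4, Matrix.SpecialLinearGroup.coe_mul] at e0 e1 e2 e3 e4'
  simp only [D, J, mk2] at e0 e1 e2 e3 e4'
  norm_num [Matrix.mul_fin_two, Matrix.trace_fin_two_of] at e0 e1 e2 e3 e4'
  -- now derive the contradiction
  have eu : u + u⁻¹ = 0 := by rw [e1, ← e3]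
  field_simp at e0 eu e4'
  have h2 : (2 : ℂ) = 0 := by
    linear_combination e4' + e0 + eu
  norm_num at h2

/-- The pure mapping class group orbits in `Char(0,5)` of the families
`ρ₁(u,v) = (D(v), D(u), J, [[0,u²],[−u⁻²,0]])` and `ρ₂(u′,v′) = (J, D(v′), D(u′), D(v′))`
are pairwise distinct. -/
theorem rho1_rho2_orbits_distinct (u v u' v' : ℂ)
    (hu : u ≠ 0) (hv : v ≠ 0) (hu' : u' ≠ 0) (hv' : v' ≠ 0)
    (g h : Equiv.Perm S4) (hg : g ∈ P) (hh : h ∈ P) :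
    χ (g (D v hv, D u hu, J, mk2 0 (u ^ 2) (-(u ^ 2)⁻¹) 0 (by field_simp; norm_num))) ≠
    χ (h (J, D v' hv', D u' hu', D v' hv')) := by
  exact rho1_rho2_aux u v u' v' hu hv hu' hv' g h hg hh (by field_simp; norm_num)
end
end
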